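/- (Uniqueness of classical solutions.) Let (T₁, q₁) and (T₂, q₂) be two classical solutions of the Guyer–Krumhansl system on (0,l), both with boundary conditions q(0,t) = q(l,t) = 0, and with the same initial data T₁(x,0) = T₂(x,0) and q₁(x,0) = q₂(x,0) for all x ∈ [0,l]. Then T₁ = T₂ and q₁ = q₂ on [0,l] × [0,∞). -/

import Mathlib

open Set MeasureTheory intervalIntegral

/-- A classical solution of the one-dimensional Guyer–Krumhansl system on `(0, l)`:
`T` is the temperature, `q` the heat flux, and `Tt, Tx, qt, qx, qxx` are the
corresponding partial derivatives (continuous on `[0,l] × [0,∞)`), satisfying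
`ρ c T_t + q_x = 0` and `τ_q q_t + q − μ² q_xx + k T_x = 0` on `(0,l) × (0,∞)`,
with adiabatic boundary conditions `q(0,t) = q(l,t) = 0` for all `t ≥ 0`. -/
structure IsGKSolution (l ρ c τq μ2 k : ℝ)
    (T q Tt Tx qt qx qxx : ℝ → ℝ → ℝ) : Prop where
  contT : ContinuousOn (fun p : ℝ × ℝ => T p.1 p.2) (Icc (0:ℝ) l ×ˢ Ici (0:ℝ))
  contq : ContinuousOn (fun p : ℝ × ℝ => q p.1 p.2) (Icc (0:ℝ) l ×ˢ Ici (0:ℝ))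
  hTt : ∀ x ∈ Icc (0:ℝ) l, ∀ t ∈ Ici (0:ℝ),
    HasDerivWithinAt (fun s => T x s) (Tt x t) (Ici (0:ℝ)) t
  hTx : ∀ x ∈ Icc (0:ℝ) l, ∀ t ∈ Ici (0:ℝ),
    HasDerivWithinAt (fun y => T y t) (Tx x t) (Icc (0:ℝ) l) x
  hqt : ∀ x ∈ Icc (0:ℝ) l, ∀ t ∈ Ici (0:ℝ),
    HasDerivWithinAt (fun s => q x s) (qt x t) (Ici (0:ℝ)) t
  hqx : ∀ x ∈ Icc (0:ℝ) l, ∀ t ∈ Ici (0:ℝ),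
    HasDerivWithinAt (fun y => q y t) (qx x t) (Icc (0:ℝ) l) x
  hqxx : ∀ x ∈ Icc (0:ℝ) l, ∀ t ∈ Ici (0:ℝ),
    HasDerivWithinAt (fun y => qx y t) (qxx x t) (Icc (0:ℝ) l) x
  contTt : ContinuousOn (fun p : ℝ × ℝ => Tt p.1 p.2) (Icc (0:ℝ) l ×ˢ Ici (0:ℝ))
  contTx : ContinuousOn (fun p : ℝ × ℝ => Tx p.1 p.2) (Icc (0:ℝ) l ×ˢ Ici (0:ℝ))
  contqt : ContinuousOn (fun p : ℝ × ℝ => qt p.1 p.2) (Icc (0:ℝ) l ×ˢ Ici (0:ℝ))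
  contqx : ContinuousOn (fun p : ℝ × ℝ => qx p.1 p.2) (Icc (0:ℝ) l ×ˢ Ici (0:ℝ))
  contqxx : ContinuousOn (fun p : ℝ × ℝ => qxx p.1 p.2) (Icc (0:ℝ) l ×ˢ Ici (0:ℝ))
  pde1 : ∀ x ∈ Ioo (0:ℝ) l, ∀ t ∈ Ioi (0:ℝ), ρ * c * Tt x t + qx x t = 0
  pde2 : ∀ x ∈ Ioo (0:ℝ) l, ∀ t ∈ Ioi (0:ℝ),
    τq * qt x t + q x t - μ2 * qxx x t + k * Tx x t = 0
  bc0 : ∀ t : ℝ, 0 ≤ t → q 0 t = 0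
  bcl : ∀ t : ℝ, 0 ≤ t → q l t = 0

/-- The functional energy `E(t) = (ρc/2)∫₀ˡ T² dx + (τ_q/(2k))∫₀ˡ q² dx`. -/
noncomputable def gkEnergy (l ρ c τq k : ℝ) (T q : ℝ → ℝ → ℝ) (t : ℝ) : ℝ :=
  ρ * c / 2 * (∫ x in (0:ℝ)..l, (T x t) ^ 2)
    + τq / (2 * k) * (∫ x in (0:ℝ)..l, (q x t) ^ 2)

section GKHelpers
open Topology Filter


/-- slice in x of a product-continuous function -/
lemma gk_sliceX {l : ℝ} {F : ℝ → ℝ → ℝ}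
    (hF : ContinuousOn (fun p : ℝ × ℝ => F p.1 p.2) (Icc (0:ℝ) l ×ˢ Ici (0:ℝ)))
    {t : ℝ} (ht : 0 ≤ t) : ContinuousOn (fun x => F x t) (Icc (0:ℝ) l) := by
  have : ContinuousOn (fun x : ℝ => ((x, t) : ℝ × ℝ)) (Icc (0:ℝ) l) :=
    (continuous_id.prodMk continuous_const).continuousOn
  exact hF.comp this (fun x hx => ⟨hx, ht⟩)

lemma gk_sliceT {l : ℝ} {F : ℝ → ℝ → ℝ}
    (hF : ContinuousOn (fun p : ℝ × ℝ => F p.1 p.2) (Icc (0:ℝ) l ×ˢ Ici (0:ℝ)))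
    {x : ℝ} (hx : x ∈ Icc (0:ℝ) l) : ContinuousOn (fun t => F x t) (Ici (0:ℝ)) := by
  have : ContinuousOn (fun t : ℝ => ((x, t) : ℝ × ℝ)) (Ici (0:ℝ)) :=
    (continuous_const.prodMk continuous_id).continuousOn
  exact hF.comp this (fun s hs => ⟨hx, hs⟩)

lemma gk_intervalIntegrable {l : ℝ} (hl : 0 ≤ l) {f : ℝ → ℝ}
    (hf : ContinuousOn f (Icc (0:ℝ) l)) : IntervalIntegrable f volume 0 l := by
  apply ContinuousOn.intervalIntegrable
  rwa [uIcc_of_le hl]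

/-- continuity of parametric integral -/
lemma gk_contInt {l : ℝ} (hl : 0 < l) {F : ℝ → ℝ → ℝ}
    (hF : ContinuousOn (fun p : ℝ × ℝ => F p.1 p.2) (Icc (0:ℝ) l ×ˢ Ici (0:ℝ))) :
    ContinuousOn (fun t => ∫ x in (0:ℝ)..l, F x t) (Ici (0:ℝ)) := by
  intro t₀ ht₀
  -- bound on the compact set [0,l] × [0, t₀+1]
  obtain ⟨C, hC⟩ : ∃ C, ∀ p ∈ Icc (0:ℝ) l ×ˢ Icc (0:ℝ) (t₀+1),
      ‖(fun p : ℝ × ℝ => F p.1 p.2) p‖ ≤ C := by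
    apply IsCompact.exists_bound_of_continuousOn (isCompact_Icc.prod isCompact_Icc)
    exact hF.mono (fun p hp => ⟨hp.1, hp.2.1⟩)
  apply continuousWithinAt_of_dominated_interval (bound := fun _ => C)
  · filter_upwards [self_mem_nhdsWithin] with t ht
    exact ((gk_sliceX hF ht).aestronglyMeasurable measurableSet_Icc).mono_measure
      (Measure.restrict_mono (by rw [uIoc_of_le hl.le]; exact Ioc_subset_Icc_self) le_rfl)
  · have h1 : Iio (t₀ + 1) ∈ 𝓝[Ici (0:ℝ)] t₀ :=
      nhdsWithin_le_nhds (Iio_mem_nhds (by linarith))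
    filter_upwards [h1, self_mem_nhdsWithin] with t ht1 ht0
    filter_upwards [] with x hx
    rw [uIoc_of_le hl.le] at hx
    exact hC (x, t) ⟨Ioc_subset_Icc_self hx, ht0, ht1.le⟩
  · exact intervalIntegrable_const
  · filter_upwards [] with x hx
    rw [uIoc_of_le hl.le] at hx
    exact gk_sliceT hF (Ioc_subset_Icc_self hx) t₀ ht₀

lemma gk_aesm {l : ℝ} (hl : 0 < l) {f : ℝ → ℝ}
    (hf : ContinuousOn f (Icc (0:ℝ) l)) :
    AEStronglyMeasurable f (volume.restrict (Set.uIoc (0:ℝ) l)) :=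
  (hf.aestronglyMeasurable measurableSet_Icc).mono_measure
    (Measure.restrict_mono (by rw [uIoc_of_le hl.le]; exact Ioc_subset_Icc_self) le_rfl)

/-- derivative of parametric integral at interior times -/
lemma gk_derivInt {l : ℝ} (hl : 0 < l) {F F' : ℝ → ℝ → ℝ}
    (hF : ContinuousOn (fun p : ℝ × ℝ => F p.1 p.2) (Icc (0:ℝ) l ×ˢ Ici (0:ℝ)))
    (hF' : ContinuousOn (fun p : ℝ × ℝ => F' p.1 p.2) (Icc (0:ℝ) l ×ˢ Ici (0:ℝ)))
    (hd : ∀ x ∈ Icc (0:ℝ) l, ∀ t ∈ Ici (0:ℝ),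
      HasDerivWithinAt (fun s => F x s) (F' x t) (Ici (0:ℝ)) t)
    {t₀ : ℝ} (ht₀ : 0 < t₀) :
    HasDerivAt (fun t => ∫ x in (0:ℝ)..l, F x t) (∫ x in (0:ℝ)..l, F' x t₀) t₀ := by
  set ε := t₀ / 2 with hε
  have hε0 : 0 < ε := by positivity
  obtain ⟨C, hC⟩ : ∃ C, ∀ p ∈ Icc (0:ℝ) l ×ˢ Icc (t₀/2) (t₀+ε),
      ‖(fun p : ℝ × ℝ => F' p.1 p.2) p‖ ≤ C := by
    apply IsCompact.exists_bound_of_continuousOn (isCompact_Icc.prod isCompact_Icc)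
    exact hF'.mono (fun p hp => ⟨hp.1, le_trans (by positivity) hp.2.1⟩)
  -- membership of ball points
  have hball : ∀ t ∈ Metric.ball t₀ ε, t₀/2 ≤ t ∧ t ≤ t₀ + ε := by
    intro t ht
    rw [Metric.mem_ball, Real.dist_eq, abs_lt] at ht
    constructor <;> [linarith [ht.1]; linarith [ht.2]]
  have key := hasDerivAt_integral_of_dominated_loc_of_deriv_le (𝕜 := ℝ) (μ := volume)
    (F := fun t x => F x t) (F' := fun t x => F' x t) (x₀ := t₀) (a := 0) (b := l)
    (bound := fun _ => C) (Metric.ball_mem_nhds t₀ hε0) ?_ ?_ ?_ ?_ ?_ ?_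
  · exact key.2
  · filter_upwards [isOpen_Ioi.mem_nhds ht₀] with t ht
    exact gk_aesm hl (gk_sliceX hF (le_of_lt ht))
  · exact (gk_intervalIntegrable hl.le (gk_sliceX hF ht₀.le)) 
  · exact gk_aesm hl (gk_sliceX hF' ht₀.le)
  · filter_upwards [] with x hx
    intro t ht
    rw [uIoc_of_le hl.le] at hx
    obtain ⟨h1, h2⟩ := hball t ht
    exact hC (x, t) ⟨Ioc_subset_Icc_self hx, ⟨h1, h2⟩⟩
  · exact intervalIntegrable_const
  · filter_upwards [] with x hx
    intro t ht
    rw [uIoc_of_le hl.le] at hx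
    obtain ⟨h1, _⟩ := hball t ht
    have ht0 : 0 < t := lt_of_lt_of_le (by positivity) h1
    exact (hd x (Ioc_subset_Icc_self hx) t ht0.le).hasDerivAt (Ici_mem_nhds ht0)

/-- FTC for functions with one-sided derivatives on `[0,l]` -/
lemma gk_ftc {l : ℝ} (hl : 0 ≤ l) {f f' : ℝ → ℝ}
    (hc : ContinuousOn f (Icc (0:ℝ) l))
    (hd : ∀ x ∈ Icc (0:ℝ) l, HasDerivWithinAt f (f' x) (Icc (0:ℝ) l) x)
    (hc' : ContinuousOn f' (Icc (0:ℝ) l)) :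
    ∫ x in (0:ℝ)..l, f' x = f l - f 0 := by
  apply integral_eq_sub_of_hasDeriv_right_of_le hl hc
  · intro x hx
    exact ((hd x (Ioo_subset_Icc_self hx)).hasDerivAt
      (Icc_mem_nhds hx.1 hx.2)).hasDerivWithinAt
  · exact gk_intervalIntegrable hl hc'

/-- a continuous function on `[0,l]` whose square has zero integral vanishes -/
lemma gk_zero_of_integral_sq {l : ℝ} (hl : 0 < l) {f : ℝ → ℝ}
    (hc : ContinuousOn f (Icc (0:ℝ) l))
    (hint : ∫ x in (0:ℝ)..l, (f x) ^ 2 = 0) : ∀ x ∈ Icc (0:ℝ) l, f x = 0 := by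
  have hsq : ContinuousOn (fun x => (f x) ^ 2) (Icc (0:ℝ) l) := hc.pow 2
  have hzero : (fun x => (f x) ^ 2) =ᵐ[volume.restrict (Ioc (0:ℝ) l)] 0 := by
    rw [← integral_eq_zero_iff_of_le_of_nonneg_ae hl.le]
    · exact hint
    · filter_upwards [] with x; positivity
    · exact gk_intervalIntegrable hl.le hsq
  have hae : ∀ᵐ x ∂volume, x ∈ Ioc (0:ℝ) l → (f x) ^ 2 = 0 :=
    (ae_restrict_iff' measurableSet_Ioc).mp hzero
  intro x₀ hx₀
  by_contra hne
  have hpos : 0 < (f x₀) ^ 2 := by positivity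
  -- continuity: f² > f x₀²/2 on a neighborhood within Icc
  have hcw : ContinuousWithinAt (fun x => (f x) ^ 2) (Icc (0:ℝ) l) x₀ := hsq x₀ hx₀
  have hev : ∀ᶠ x in 𝓝[Icc (0:ℝ) l] x₀, (f x) ^ 2 > (f x₀) ^ 2 / 2 :=
    hcw.eventually_const_lt (by linarith)
  rw [eventually_nhdsWithin_iff] at hev
  obtain ⟨U, hU, hUo, hx₀U⟩ := eventually_nhds_iff.mp hev
  -- U ∩ Ioo 0 l is nonempty open
  have hxcl : x₀ ∈ closure (Ioo (0:ℝ) l) := by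
    rw [closure_Ioo hl.ne]; exact hx₀
  obtain ⟨y, hyU, hyI⟩ := mem_closure_iff.mp hxcl U hUo hx₀U
  have hVopen : IsOpen (U ∩ Ioo (0:ℝ) l) := hUo.inter isOpen_Ioo
  have hVne : (U ∩ Ioo (0:ℝ) l).Nonempty := ⟨y, hyU, hyI⟩
  have hVpos : 0 < volume (U ∩ Ioo (0:ℝ) l) := hVopen.measure_pos volume hVne
  -- but V ⊆ null set
  have hsub : U ∩ Ioo (0:ℝ) l ⊆ {x | ¬ (x ∈ Ioc (0:ℝ) l → (f x) ^ 2 = 0)} := by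
    rintro z ⟨hzU, hzI⟩
    intro hcontra
    have h1 : (f z) ^ 2 = 0 := hcontra (Ioo_subset_Ioc_self hzI)
    have h2 : (f z) ^ 2 > (f x₀) ^ 2 / 2 := hU z hzU (Ioo_subset_Icc_self hzI)
    linarith
  have : volume {x | ¬ (x ∈ Ioc (0:ℝ) l → (f x) ^ 2 = 0)} = 0 := hae
  exact absurd (measure_mono_null hsub this) (by simpa using hVpos.ne')

lemma gk_zero (l ρ c τq μ2 k : ℝ) (hl : 0 < l) (hρ : 0 < ρ) (hc : 0 < c)
    (hτq : 0 < τq) (hμ2 : 0 < μ2) (hk : 0 < k)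
    (T q Tt Tx qt qx qxx : ℝ → ℝ → ℝ)
    (hgk : IsGKSolution l ρ c τq μ2 k T q Tt Tx qt qx qxx)
    (hT0 : ∀ x ∈ Icc (0:ℝ) l, T x 0 = 0)
    (hq0 : ∀ x ∈ Icc (0:ℝ) l, q x 0 = 0) :
    ∀ x ∈ Icc (0:ℝ) l, ∀ t ∈ Ici (0:ℝ), T x t = 0 ∧ q x t = 0 := by
  set I1 : ℝ → ℝ := fun t => ∫ x in (0:ℝ)..l, (T x t) ^ 2 with hI1def
  set I2 : ℝ → ℝ := fun t => ∫ x in (0:ℝ)..l, (q x t) ^ 2 with hI2def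
  set E : ℝ → ℝ := fun t => ρ * c / 2 * I1 t + τq / (2 * k) * I2 t with hEdef
  -- continuity of squared integrands on the product set
  have hcT2 : ContinuousOn (fun p : ℝ × ℝ => (T p.1 p.2) ^ 2) (Icc (0:ℝ) l ×ˢ Ici (0:ℝ)) :=
    hgk.contT.pow 2
  have hcq2 : ContinuousOn (fun p : ℝ × ℝ => (q p.1 p.2) ^ 2) (Icc (0:ℝ) l ×ˢ Ici (0:ℝ)) :=
    hgk.contq.pow 2
  have hcT2' : ContinuousOn (fun p : ℝ × ℝ => 2 * T p.1 p.2 * Tt p.1 p.2)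
      (Icc (0:ℝ) l ×ˢ Ici (0:ℝ)) := (continuousOn_const.mul hgk.contT).mul hgk.contTt
  have hcq2' : ContinuousOn (fun p : ℝ × ℝ => 2 * q p.1 p.2 * qt p.1 p.2)
      (Icc (0:ℝ) l ×ˢ Ici (0:ℝ)) := (continuousOn_const.mul hgk.contq).mul hgk.contqt
  have hdT2 : ∀ x ∈ Icc (0:ℝ) l, ∀ t ∈ Ici (0:ℝ),
      HasDerivWithinAt (fun s => (T x s) ^ 2) (2 * T x t * Tt x t) (Ici (0:ℝ)) t := by
    intro x hx t ht
    simpa using (hgk.hTt x hx t ht).fun_pow 2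
  have hdq2 : ∀ x ∈ Icc (0:ℝ) l, ∀ t ∈ Ici (0:ℝ),
      HasDerivWithinAt (fun s => (q x s) ^ 2) (2 * q x t * qt x t) (Ici (0:ℝ)) t := by
    intro x hx t ht
    simpa using (hgk.hqt x hx t ht).fun_pow 2
  -- E is continuous on [0,∞)
  have hEcont : ContinuousOn E (Ici (0:ℝ)) :=
    (continuousOn_const.mul (gk_contInt hl hcT2)).add
      (continuousOn_const.mul (gk_contInt hl hcq2))
  -- derivative of E for t > 0
  have hEderiv : ∀ t ∈ Ioi (0:ℝ), HasDerivAt E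
      (ρ * c / 2 * (∫ x in (0:ℝ)..l, 2 * T x t * Tt x t)
        + τq / (2 * k) * (∫ x in (0:ℝ)..l, 2 * q x t * qt x t)) t := by
    intro t ht
    exact ((gk_derivInt hl hcT2 hcT2' hdT2 ht).const_mul (ρ * c / 2)).add
      ((gk_derivInt hl hcq2 hcq2' hdq2 ht).const_mul (τq / (2 * k)))
  -- the derivative is nonpositive
  have hDneg : ∀ t ∈ Ioi (0:ℝ),
      ρ * c / 2 * (∫ x in (0:ℝ)..l, 2 * T x t * Tt x t)
        + τq / (2 * k) * (∫ x in (0:ℝ)..l, 2 * q x t * qt x t) ≤ 0 := by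
    intro t ht
    have ht' : (0:ℝ) ≤ t := le_of_lt ht
    -- slices
    have hsT := gk_sliceX hgk.contT ht'
    have hsq := gk_sliceX hgk.contq ht'
    have hsTt := gk_sliceX hgk.contTt ht'
    have hsTx := gk_sliceX hgk.contTx ht'
    have hsqt := gk_sliceX hgk.contqt ht'
    have hsqx := gk_sliceX hgk.contqx ht'
    have hsqxx := gk_sliceX hgk.contqxx ht'
    set G : ℝ → ℝ := fun x => ρ * c / 2 * (2 * T x t * Tt x t)
        + τq / (2 * k) * (2 * q x t * qt x t) with hGdef
    set Φ : ℝ → ℝ := fun x => -(T x t * q x t) + μ2 / k * (q x t * qx x t) with hΦdef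
    set Φ' : ℝ → ℝ := fun x => -(Tx x t * q x t + T x t * qx x t)
        + μ2 / k * (qx x t * qx x t + q x t * qxx x t) with hΦ'def
    set R : ℝ → ℝ := fun x => 1 / k * (q x t) ^ 2 + μ2 / k * (qx x t) ^ 2 with hRdef
    have hGcont : ContinuousOn G (Icc (0:ℝ) l) :=
      (continuousOn_const.mul ((continuousOn_const.mul hsT).mul hsTt)).add
        (continuousOn_const.mul ((continuousOn_const.mul hsq).mul hsqt))
    have hΦcont : ContinuousOn Φ (Icc (0:ℝ) l) :=
      ((hsT.mul hsq).neg).add (continuousOn_const.mul (hsq.mul hsqx))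
    have hΦ'cont : ContinuousOn Φ' (Icc (0:ℝ) l) :=
      (((hsTx.mul hsq).add (hsT.mul hsqx)).neg).add
        (continuousOn_const.mul ((hsqx.mul hsqx).add (hsq.mul hsqxx)))
    have hRcont : ContinuousOn R (Icc (0:ℝ) l) :=
      (continuousOn_const.mul (hsq.pow 2)).add (continuousOn_const.mul (hsqx.pow 2))
    have hΦderiv : ∀ x ∈ Icc (0:ℝ) l, HasDerivWithinAt Φ (Φ' x) (Icc (0:ℝ) l) x := by
      intro x hx
      exact (((hgk.hTx x hx t ht').mul (hgk.hqx x hx t ht')).neg).add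
        (((hgk.hqx x hx t ht').mul (hgk.hqxx x hx t ht')).const_mul (μ2 / k))
    have hftc : ∫ x in (0:ℝ)..l, Φ' x = 0 := by
      rw [gk_ftc hl.le hΦcont hΦderiv hΦ'cont]
      simp [hΦdef, hgk.bc0 t ht', hgk.bcl t ht']
    -- pointwise identity on Ioo
    have hpt : ∀ x ∈ Ioo (0:ℝ) l, G x = Φ' x - R x := by
      intro x hx
      have h1 := hgk.pde1 x hx t ht
      have h2 := hgk.pde2 x hx t ht
      simp only [hGdef, hΦ'def, hRdef]
      have hk' : (k:ℝ) ≠ 0 := ne_of_gt hk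
      field_simp
      linear_combination (k* T x t) * h1 + (q x t) * h2
    -- integrals
    have hintG : IntervalIntegrable G volume 0 l := gk_intervalIntegrable hl.le hGcont
    have hintΦ' : IntervalIntegrable Φ' volume 0 l := gk_intervalIntegrable hl.le hΦ'cont
    have hintR : IntervalIntegrable R volume 0 l := gk_intervalIntegrable hl.le hRcont
    have hcongr : ∫ x in (0:ℝ)..l, G x = ∫ x in (0:ℝ)..l, (Φ' x - R x) := by
      apply intervalIntegral.integral_congr_ae
      have hnl : ∀ᵐ x : ℝ ∂volume, x ≠ l := by
        have : (volume : Measure ℝ) {l} = 0 := measure_singleton l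
        exact measure_eq_zero_iff_ae_notMem.mp this
      filter_upwards [hnl] with x hxl hxI
      rw [uIoc_of_le hl.le] at hxI
      exact hpt x ⟨hxI.1, lt_of_le_of_ne hxI.2 hxl⟩
    have hRnonneg : 0 ≤ ∫ x in (0:ℝ)..l, R x := by
      apply integral_nonneg hl.le
      intro u hu
      simp only [hRdef]
      positivity
    have hsplit : ∫ x in (0:ℝ)..l, (Φ' x - R x)
        = (∫ x in (0:ℝ)..l, Φ' x) - ∫ x in (0:ℝ)..l, R x :=
      intervalIntegral.integral_sub hintΦ' hintR
    have hGsum : ρ * c / 2 * (∫ x in (0:ℝ)..l, 2 * T x t * Tt x t)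
        + τq / (2 * k) * (∫ x in (0:ℝ)..l, 2 * q x t * qt x t)
        = ∫ x in (0:ℝ)..l, G x := by
      rw [hGdef, ← intervalIntegral.integral_const_mul, ← intervalIntegral.integral_const_mul,
        ← intervalIntegral.integral_add]
      · exact gk_intervalIntegrable hl.le
          (continuousOn_const.mul ((continuousOn_const.mul hsT).mul hsTt))
      · exact gk_intervalIntegrable hl.le
          (continuousOn_const.mul ((continuousOn_const.mul hsq).mul hsqt))
    rw [hGsum, hcongr, hsplit, hftc]
    linarith
  -- E is antitone on [0,∞)
  have hanti : AntitoneOn E (Ici (0:ℝ)) := by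
    apply antitoneOn_of_deriv_nonpos (convex_Ici 0) hEcont
    · intro t ht
      rw [interior_Ici] at ht
      exact (hEderiv t ht).differentiableAt.differentiableWithinAt
    · intro t ht
      rw [interior_Ici] at ht
      rw [(hEderiv t ht).deriv]
      exact hDneg t ht
  -- E 0 = 0
  have hE0 : E 0 = 0 := by
    have h1 : I1 0 = 0 := by
      show (∫ x in (0:ℝ)..l, (T x 0) ^ 2) = 0
      rw [show (∫ x in (0:ℝ)..l, (T x 0) ^ 2) = ∫ x in (0:ℝ)..l, (0:ℝ) from
        intervalIntegral.integral_congr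
          (fun x hx => by rw [uIcc_of_le hl.le] at hx; simp [hT0 x hx])]
      simp
    have h2 : I2 0 = 0 := by
      show (∫ x in (0:ℝ)..l, (q x 0) ^ 2) = 0
      rw [show (∫ x in (0:ℝ)..l, (q x 0) ^ 2) = ∫ x in (0:ℝ)..l, (0:ℝ) from
        intervalIntegral.integral_congr
          (fun x hx => by rw [uIcc_of_le hl.le] at hx; simp [hq0 x hx])]
      simp
    simp [hEdef, h1, h2]
  -- nonnegativity of I1, I2
  have hI1nn : ∀ t, 0 ≤ I1 t := fun t =>
    integral_nonneg hl.le (fun u _ => by positivity)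
  have hI2nn : ∀ t, 0 ≤ I2 t := fun t =>
    integral_nonneg hl.le (fun u _ => by positivity)
  -- hence E ≡ 0 and each integral vanishes
  have hEzero : ∀ t ∈ Ici (0:ℝ), E t = 0 := by
    intro t ht
    have hle : E t ≤ E 0 := hanti (self_mem_Ici) ht ht
    have hge : 0 ≤ E t := by
      have := hI1nn t; have := hI2nn t
      have h1 : 0 ≤ ρ * c / 2 * I1 t := by positivity
      have h2 : 0 ≤ τq / (2 * k) * I2 t := by positivity
      simp only [hEdef]; linarith
    rw [hE0] at hle
    linarith
  intro x hx t ht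
  have hEt := hEzero t ht
  have h1 : 0 ≤ ρ * c / 2 * I1 t := by have := hI1nn t; positivity
  have h2 : 0 ≤ τq / (2 * k) * I2 t := by have := hI2nn t; positivity
  have hA : 0 < ρ * c / 2 := by positivity
  have hB : 0 < τq / (2 * k) := by positivity
  have hI1z : I1 t = 0 := by
    simp only [hEdef] at hEt
    nlinarith [hI1nn t, hI2nn t]
  have hI2z : I2 t = 0 := by
    simp only [hEdef] at hEt
    nlinarith [hI1nn t, hI2nn t]
  constructor
  · exact gk_zero_of_integral_sq hl (gk_sliceX hgk.contT ht) hI1z x hx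
  · exact gk_zero_of_integral_sq hl (gk_sliceX hgk.contq ht) hI2z x hx

end GKHelpers

/-- uniqueness of classical solutions: two classical solutions of the
Guyer–Krumhansl system with the same initial data coincide on `[0,l] × [0,∞)`. -/
theorem gk_uniqueness
    (l ρ c τq μ2 k : ℝ) (hl : 0 < l) (hρ : 0 < ρ) (hc : 0 < c)
    (hτq : 0 < τq) (hμ2 : 0 < μ2) (hk : 0 < k)
    (T₁ q₁ Tt₁ Tx₁ qt₁ qx₁ qxx₁ T₂ q₂ Tt₂ Tx₂ qt₂ qx₂ qxx₂ : ℝ → ℝ → ℝ)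
    (hgk₁ : IsGKSolution l ρ c τq μ2 k T₁ q₁ Tt₁ Tx₁ qt₁ qx₁ qxx₁)
    (hgk₂ : IsGKSolution l ρ c τq μ2 k T₂ q₂ Tt₂ Tx₂ qt₂ qx₂ qxx₂)
    (hT0 : ∀ x ∈ Icc (0:ℝ) l, T₁ x 0 = T₂ x 0)
    (hq0 : ∀ x ∈ Icc (0:ℝ) l, q₁ x 0 = q₂ x 0) :
    ∀ x ∈ Icc (0:ℝ) l, ∀ t ∈ Ici (0:ℝ), T₁ x t = T₂ x t ∧ q₁ x t = q₂ x t := by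
  -- the difference of the two solutions solves the system with zero initial data
  have hgk : IsGKSolution l ρ c τq μ2 k
      (fun x t => T₁ x t - T₂ x t) (fun x t => q₁ x t - q₂ x t)
      (fun x t => Tt₁ x t - Tt₂ x t) (fun x t => Tx₁ x t - Tx₂ x t)
      (fun x t => qt₁ x t - qt₂ x t) (fun x t => qx₁ x t - qx₂ x t)
      (fun x t => qxx₁ x t - qxx₂ x t) :=
    { contT := hgk₁.contT.sub hgk₂.contT
      contq := hgk₁.contq.sub hgk₂.contq
      hTt := fun x hx t ht => (hgk₁.hTt x hx t ht).sub (hgk₂.hTt x hx t ht)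
      hTx := fun x hx t ht => (hgk₁.hTx x hx t ht).sub (hgk₂.hTx x hx t ht)
      hqt := fun x hx t ht => (hgk₁.hqt x hx t ht).sub (hgk₂.hqt x hx t ht)
      hqx := fun x hx t ht => (hgk₁.hqx x hx t ht).sub (hgk₂.hqx x hx t ht)
      hqxx := fun x hx t ht => (hgk₁.hqxx x hx t ht).sub (hgk₂.hqxx x hx t ht)
      contTt := hgk₁.contTt.sub hgk₂.contTt
      contTx := hgk₁.contTx.sub hgk₂.contTx
      contqt := hgk₁.contqt.sub hgk₂.contqt
      contqx := hgk₁.contqx.sub hgk₂.contqx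
      contqxx := hgk₁.contqxx.sub hgk₂.contqxx
      pde1 := fun x hx t ht => by
        linear_combination hgk₁.pde1 x hx t ht - hgk₂.pde1 x hx t ht
      pde2 := fun x hx t ht => by
        linear_combination hgk₁.pde2 x hx t ht - hgk₂.pde2 x hx t ht
      bc0 := fun t ht => by rw [hgk₁.bc0 t ht, hgk₂.bc0 t ht, sub_zero]
      bcl := fun t ht => by rw [hgk₁.bcl t ht, hgk₂.bcl t ht, sub_zero] }
  have hz := gk_zero l ρ c τq μ2 k hl hρ hc hτq hμ2 hk _ _ _ _ _ _ _ hgk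
    (fun x hx => by simp [hT0 x hx]) (fun x hx => by simp [hq0 x hx])
  intro x hx t ht
  obtain ⟨h1, h2⟩ := hz x hx t ht
  exact ⟨sub_eq_zero.mp h1, sub_eq_zero.mp h2⟩
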